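/- Let N = N₁ ⊕ N₂ be an orthogonal direct sum of Hilbert C*-modules over A with projections p₁, p₂, and let Y ⊆ N be a subset that is totally bounded with respect to every pseudometric d_{F,Φ} given by a *-N⁰-admissible system F of A-linear functionals on N and a sequence of states Φ. Then p₁Y and p₂Y are totally bounded with respect to every pseudometric coming from *-admissible systems on N₁ for p₁N⁰ and on N₂ for p₂N⁰, respectively. -/

import Mathlib

open scoped ComplexOrder RightActions InnerProductSpace MultiplierAlgebra
open Filter WithCStarModule

noncomputable section

variable {A : Type*} [NonUnitalCStarAlgebra A] [PartialOrder A] [StarOrderedRing A]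

/-- A state on a C⋆-algebra: a positive continuous linear functional of norm one. -/
def IsState (φ : A →L[ℂ] ℂ) : Prop :=
  (∀ a : A, 0 ≤ φ (star a * a)) ∧ ‖φ‖ = 1

variable {E : Type*} [NormedAddCommGroup E] [NormedSpace ℂ E] [SMul Aᵐᵒᵖ E] [CStarModule Aᵐᵒᵖ E]

/-- `f : E → A` is `A`-linear; together with continuity and `ℂ`-linearity this says that `f`
is a bounded `A`-linear functional on the Hilbert C⋆-module `E`. -/
def IsALinear (f : E →L[ℂ] A) : Prop := ∀ (x : E) (a : A), f (x <• a) = f x * a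

/-- A `*`-`N⁰`-admissible system of `A`-linear functionals: each has norm at most one, and for
every `x ∈ N⁰` the series `Σᵢ (fᵢ x)* (fᵢ x)` is norm convergent with partial sums bounded by
`⟪x, x⟫`. -/
def StarAdmissible (N0 : Set E) (f : ℕ → E →L[ℂ] A) : Prop :=
  (∀ i, IsALinear (f i)) ∧ (∀ i, ‖f i‖ ≤ 1) ∧
    ∀ x ∈ N0, (∀ n : ℕ, ∑ i ∈ Finset.range n, star (f i x) * f i x ≤ MulOpposite.unop ⟪x, x⟫_(Aᵐᵒᵖ)) ∧
      Summable fun i => star (f i x) * f i x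

/-- An `N⁰`-admissible system of elements of `E`: each has norm at most one and for every
`x ∈ N⁰` the series `Σᵢ ⟪x, xᵢ⟫⟪xᵢ, x⟫` converges with partial sums bounded by `⟪x, x⟫`. -/
def Admissible (N0 : Set E) (X : ℕ → E) : Prop :=
  (∀ i, ‖X i‖ ≤ 1) ∧
    ∀ x ∈ N0, (∀ n : ℕ, ∑ i ∈ Finset.range n, MulOpposite.unop ⟪x, X i⟫_(Aᵐᵒᵖ) * MulOpposite.unop ⟪X i, x⟫_(Aᵐᵒᵖ) ≤ MulOpposite.unop ⟪x, x⟫_(Aᵐᵒᵖ)) ∧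
      Summable fun i => MulOpposite.unop ⟪x, X i⟫_(Aᵐᵒᵖ) * MulOpposite.unop ⟪X i, x⟫_(Aᵐᵒᵖ)

/-- The pseudometric `d_{F,Φ}` associated with a system of functionals `f` and a sequence of
states `Φ`: `d_{F,Φ}(x,y)² = sup_k Σ_{i ≥ k} |φ_k (f_i (x - y))|²`. -/
def dF (f : ℕ → E →L[ℂ] A) (Φ : ℕ → A →L[ℂ] ℂ) (x y : E) : ℝ :=
  Real.sqrt (⨆ k : ℕ, ∑' i : ℕ, ‖Φ k (f (k + i) (x - y))‖ ^ 2)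

/-- The pseudometric `d_{X,Φ}` associated with a system of elements `X` and a sequence of
states `Φ`: `d_{X,Φ}(x,y)² = sup_k Σ_{i ≥ k} |φ_k ⟪x - y, x_i⟫|²`. -/
def dX (X : ℕ → E) (Φ : ℕ → A →L[ℂ] ℂ) (x y : E) : ℝ :=
  Real.sqrt (⨆ k : ℕ, ∑' i : ℕ, ‖Φ k (MulOpposite.unop ⟪x - y, X (k + i)⟫_(Aᵐᵒᵖ))‖ ^ 2)

/-- `Y` is totally bounded w.r.t. the pseudometric `d`: for each `ε > 0` there is a finite
`ε`-net in `Y` consisting of elements of `Y`. -/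
def TotBddWrt (Y : Set E) (d : E → E → ℝ) : Prop :=
  ∀ ε > (0 : ℝ), ∃ t : Finset E, ↑t ⊆ Y ∧ ∀ y ∈ Y, ∃ z ∈ t, d z y < ε

/-- An operator `g : A → E` is adjointable, with adjoint an `A`-functional `gs` on `E`:
`⟪g a, x⟫ = ⟪a, gs x⟫_A = a* ⬝ gs x`. -/
def AdjFromA (g : A →L[ℂ] E) : Prop :=
  ∃ gs : E →L[ℂ] A, ∀ (a : A) (x : E), MulOpposite.unop ⟪g a, x⟫_(Aᵐᵒᵖ) = star a * gs x

/-- An `A`-functional `h : A → A` is adjointable: there is `hs : A → A` with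
`⟪hs a, b⟫ = ⟪a, h b⟫`, i.e. `(hs a)* b = a* (h b)`. -/
def AdjFunctional (h : A →L[ℂ] A) : Prop :=
  ∃ hs : A →L[ℂ] A, ∀ a b : A, star (hs a) * b = star a * h b

/-- A functional `f : E → A` is locally adjointable if for every adjointable `A`-linear
operator `g : A → E` the composition `f ∘ g : A → A` is an adjointable functional. -/
def LocAdj (f : E →L[ℂ] A) : Prop :=
  ∀ g : A →L[ℂ] E, (∀ a b : A, g (a * b) = g a <• b) → AdjFromA g →
    AdjFunctional (f.comp g)

/-- A functional `f : E → A` is represented by a (modular) multiplier of `E`: for every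
`a ∈ A` the functional `x ↦ a* (f x)` is represented by an element of `E` (this encodes
`f ⬝ a ∈ E ⊆ M(E)`, using `E = M(E)A`). -/
def OuterRepr (f : E →L[ℂ] A) : Prop :=
  ∀ a : A, ∃ z : E, ∀ y : E, star a * f y = MulOpposite.unop ⟪z, y⟫_(Aᵐᵒᵖ)

/-- The Hilbert C⋆-module `E` is countably generated: there is a sequence whose set of
`A`-linear combinations is dense. -/
def CountGen (A : Type*) (E : Type*) [NonUnitalCStarAlgebra A] [PartialOrder A]
    [StarOrderedRing A] [NormedAddCommGroup E] [NormedSpace ℂ E] [SMul Aᵐᵒᵖ E]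
    [CStarModule Aᵐᵒᵖ E] : Prop :=
  ∃ g : ℕ → E,
    closure (↑(Submodule.span ℂ (Set.range g ∪ {y | ∃ i, ∃ a : A, y = g i <• a})) : Set E)
      = Set.univ

/-- `F : M → E` is `A`-compact: it is a norm limit of finite sums of the elementary operators
`x ↦ y ⬝ ⟪z, x⟫`. -/
def ACompact {M : Type*} [NormedAddCommGroup M] [NormedSpace ℂ M] [SMul Aᵐᵒᵖ M]
    [CStarModule Aᵐᵒᵖ M] (F : M →L[ℂ] E) : Prop :=
  ∀ ε > (0 : ℝ), ∃ (n : ℕ) (y : Fin n → E) (z : Fin n → M),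
    ∀ x : M, ‖F x - ∑ i, y i <• MulOpposite.unop ⟪z i, x⟫_(Aᵐᵒᵖ)‖ ≤ ε * ‖x‖


section Aux

variable {M : Type*} [NormedAddCommGroup M] [NormedSpace ℂ M] [SMul Aᵐᵒᵖ M] [CStarModule Aᵐᵒᵖ M]

theorem totBdd_image_of_projection (p : E →L[ℂ] M)
    (hmod : ∀ (x : E) (a : A), p (x <• a) = p x <• a)
    (hinner : ∀ x : E, MulOpposite.unop ⟪p x, p x⟫_(Aᵐᵒᵖ) ≤ MulOpposite.unop ⟪x, x⟫_(Aᵐᵒᵖ))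
    (hnorm : ∀ x : E, ‖p x‖ ≤ ‖x‖)
    (N0 : Set E) (Y : Set E)
    (h : ∀ (f : ℕ → E →L[ℂ] A) (Φ : ℕ → A →L[ℂ] ℂ),
      StarAdmissible N0 f → (∀ k, IsState (Φ k)) → TotBddWrt Y (dF f Φ)) :
    ∀ (f₁ : ℕ → M →L[ℂ] A) (Φ : ℕ → A →L[ℂ] ℂ),
      StarAdmissible ((p : E → M) '' N0) f₁ → (∀ k, IsState (Φ k)) →
      TotBddWrt ((p : E → M) '' Y) (dF f₁ Φ) := by
  intro f₁ Φ hadm hΦ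
  classical
  set f : ℕ → E →L[ℂ] A := fun i => (f₁ i).comp p with hf
  have hfx : ∀ (i : ℕ) (x : E), f i x = f₁ i (p x) := fun i x => rfl
  have hadm' : StarAdmissible N0 f := by
    obtain ⟨hlin, hn, hsum⟩ := hadm
    refine ⟨fun i x a => ?_, fun i => ?_, fun x hx => ?_⟩
    · rw [hfx, hfx, hmod, hlin]
    · calc ‖f i‖ ≤ ‖f₁ i‖ * ‖p‖ := (f₁ i).opNorm_comp_le p
        _ ≤ 1 := mul_le_one₀ (hn i) (norm_nonneg _)
            (p.opNorm_le_bound zero_le_one (fun x => by simpa using hnorm x))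
    · obtain ⟨hbd, hsm⟩ := hsum (p x) ⟨x, hx, rfl⟩
      exact ⟨fun n => le_trans (hbd n) (hinner x), hsm⟩
  have hd : ∀ x y : E, dF f₁ Φ (p x) (p y) = dF f Φ x y := by
    intro x y
    unfold dF
    congr 1
    refine iSup_congr fun k => tsum_congr fun i => ?_
    rw [hfx, p.map_sub]
  intro ε hε
  obtain ⟨t, htY, ht⟩ := h f Φ hadm' hΦ ε hε
  refine ⟨t.image p, ?_, ?_⟩
  · intro z hz
    simp only [Finset.coe_image, Set.mem_image] at hz
    obtain ⟨w, hw, rfl⟩ := hz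
    exact ⟨w, htY hw, rfl⟩
  · rintro y' ⟨y, hy, rfl⟩
    obtain ⟨z, hz, hzy⟩ := ht y hy
    exact ⟨p z, Finset.mem_image_of_mem p hz, by rw [hd]; exact hzy⟩

end Aux

section DirectSum

variable {E₁ E₂ : Type*}
  [NormedAddCommGroup E₁] [NormedSpace ℂ E₁] [SMul Aᵐᵒᵖ E₁] [CStarModule Aᵐᵒᵖ E₁]
  [NormedAddCommGroup E₂] [NormedSpace ℂ E₂] [SMul Aᵐᵒᵖ E₂] [CStarModule Aᵐᵒᵖ E₂]

/-- The orthogonal projection onto the first summand of `N₁ ⊕ N₂`. -/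
def proj1 : C⋆ᵐᵒᵈ(Aᵐᵒᵖ, E₁ × E₂) → E₁ := fun x => (WithCStarModule.equiv Aᵐᵒᵖ (E₁ × E₂) x).1

/-- The orthogonal projection onto the second summand of `N₁ ⊕ N₂`. -/
def proj2 : C⋆ᵐᵒᵈ(Aᵐᵒᵖ, E₁ × E₂) → E₂ := fun x => (WithCStarModule.equiv Aᵐᵒᵖ (E₁ × E₂) x).2

/-- If `Y ⊆ N₁ ⊕ N₂` is totally bounded w.r.t. all pseudometrics coming from
`*`-`N⁰`-admissible systems on `N₁ ⊕ N₂`, then `p₁Y` and `p₂Y` are totally bounded w.r.t. all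
pseudometrics coming from `*`-admissible systems for `p₁N⁰` and `p₂N⁰` respectively. -/
theorem statement9 (N0 : Submodule ℂ (C⋆ᵐᵒᵈ(Aᵐᵒᵖ, E₁ × E₂))) (Y : Set (C⋆ᵐᵒᵈ(Aᵐᵒᵖ, E₁ × E₂)))
    (h : ∀ (f : ℕ → C⋆ᵐᵒᵈ(Aᵐᵒᵖ, E₁ × E₂) →L[ℂ] A) (Φ : ℕ → A →L[ℂ] ℂ),
      StarAdmissible (N0 : Set (C⋆ᵐᵒᵈ(Aᵐᵒᵖ, E₁ × E₂))) f → (∀ k, IsState (Φ k)) →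
      TotBddWrt Y (dF f Φ)) :
    (∀ (f₁ : ℕ → E₁ →L[ℂ] A) (Φ : ℕ → A →L[ℂ] ℂ),
      StarAdmissible (proj1 '' (N0 : Set (C⋆ᵐᵒᵈ(Aᵐᵒᵖ, E₁ × E₂)))) f₁ → (∀ k, IsState (Φ k)) →
      TotBddWrt (proj1 '' Y) (dF f₁ Φ)) ∧
    (∀ (f₂ : ℕ → E₂ →L[ℂ] A) (Φ : ℕ → A →L[ℂ] ℂ),
      StarAdmissible (proj2 '' (N0 : Set (C⋆ᵐᵒᵈ(Aᵐᵒᵖ, E₁ × E₂)))) f₂ → (∀ k, IsState (Φ k)) →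
      TotBddWrt (proj2 '' Y) (dF f₂ Φ)) := by
  have h1le : ∀ x : C⋆ᵐᵒᵈ(Aᵐᵒᵖ, E₁ × E₂), ‖proj1 (E₁ := E₁) (E₂ := E₂) x‖ ≤ ‖x‖ := fun x =>
    le_trans (le_max_left _ _) (WithCStarModule.max_le_prod_norm x)
  have h2le : ∀ x : C⋆ᵐᵒᵈ(Aᵐᵒᵖ, E₁ × E₂), ‖proj2 (E₁ := E₁) (E₂ := E₂) x‖ ≤ ‖x‖ := fun x =>
    le_trans (le_max_right _ _) (WithCStarModule.max_le_prod_norm x)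
  set p₁ : C⋆ᵐᵒᵈ(Aᵐᵒᵖ, E₁ × E₂) →L[ℂ] E₁ :=
    LinearMap.mkContinuous
      { toFun := proj1, map_add' := fun x y => rfl, map_smul' := fun c x => rfl } 1
      (fun x => by rw [one_mul]; exact h1le x) with hp₁
  set p₂ : C⋆ᵐᵒᵈ(Aᵐᵒᵖ, E₁ × E₂) →L[ℂ] E₂ :=
    LinearMap.mkContinuous
      { toFun := proj2, map_add' := fun x y => rfl, map_smul' := fun c x => rfl } 1
      (fun x => by rw [one_mul]; exact h2le x) with hp₂
  have hc₁ : (p₁ : C⋆ᵐᵒᵈ(Aᵐᵒᵖ, E₁ × E₂) → E₁) = proj1 := rfl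
  have hc₂ : (p₂ : C⋆ᵐᵒᵈ(Aᵐᵒᵖ, E₁ × E₂) → E₂) = proj2 := rfl
  constructor
  · intro f₁ Φ hadm hΦ
    rw [← hc₁] at hadm ⊢
    exact totBdd_image_of_projection p₁ (fun x a => rfl)
      (fun x => by rw [WithCStarModule.prod_inner x x, MulOpposite.unop_add]; exact le_add_of_nonneg_right (MulOpposite.unop_nonneg.mpr CStarModule.inner_self_nonneg))
      h1le N0 Y h f₁ Φ hadm hΦ
  · intro f₂ Φ hadm hΦ
    rw [← hc₂] at hadm ⊢
    exact totBdd_image_of_projection p₂ (fun x a => rfl)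
      (fun x => by rw [WithCStarModule.prod_inner x x, MulOpposite.unop_add]; exact le_add_of_nonneg_left (MulOpposite.unop_nonneg.mpr CStarModule.inner_self_nonneg))
      h2le N0 Y h f₂ Φ hadm hΦ

end DirectSum
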